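/- arXiv:2002.06140 — 5 statements merged into one kernel-verified Lean document; each statement's English description precedes it below -/
import Mathlib

section
/- For integers n > m > 0 and a multi-index ν ∈ ℕ³ with |ν| = n, the quaternionic regular homogeneous polynomials satisfy the binomial identity: the sum of P_μ · P_{ν−μ} over all multi-indices μ with |μ| = m and μ < ν (componentwise μ ≤ ν, μ ≠ ν, with |μ|=m) equals binom(n,m) · P_ν. -/
open Quaternion

noncomputable section

abbrev Hq := Quaternion ℝ

/-- The quaternion units `e₁ = i`, `e₂ = j`, `e₃ = k` (with `e₀ = 1`). -/
def e : Fin 4 → Hq := ![1, ⟨0,1,0,0⟩, ⟨0,0,1,0⟩, ⟨0,0,0,1⟩]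

/-- Real coordinates of a quaternion `q = t + i x₁ + j x₂ + k x₃`. -/
def coord (q : Hq) : Fin 4 → ℝ := ![q.re, q.imI, q.imJ, q.imK]

/-- The regular variables `z_i(q) = t e_i - x_i` (here `i : Fin 3` corresponds to `i+1`). -/
def z (i : Fin 3) (q : Hq) : Hq := q.re • e i.succ - coord q i.succ • (1 : Hq)

/-- `|ν| = n₁ + n₂ + n₃` for a multi-index `ν ∈ ℕ³`. -/
def msum (ν : Fin 3 → ℕ) : ℕ := ν 0 + ν 1 + ν 2

/-- The regular homogeneous polynomial `P_ν(q)`, the symmetrized product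
`(1/n!) Σ_{(i₁,…,i_n) ∈ I_ν} z_{i₁}(q) ⋯ z_{i_n}(q)`, where the sum is over all
orderings of the multiset `{n₁·1, n₂·2, n₃·3}`. -/
def Pp (ν : Fin 3 → ℕ) (q : Hq) : Hq :=
  ((msum ν).factorial : ℝ)⁻¹ •
    ∑ f ∈ Finset.univ.filter
        (fun f : Fin (msum ν) → Fin 3 =>
          ∀ j, (Finset.univ.filter fun i => f i = j).card = ν j),
      ((List.ofFn f).map (fun i => z i q)).prod

/-- Count of the fiber of `j` under `f`. -/
def cnt {k : ℕ} (f : Fin k → Fin 3) (j : Fin 3) : ℕ :=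
  (Finset.univ.filter fun i => f i = j).card

/-- Functions `Fin k → Fin 3` with fiber counts `ν`. -/
def S (k : ℕ) (ν : Fin 3 → ℕ) : Finset (Fin k → Fin 3) :=
  Finset.univ.filter fun f => ∀ j, (Finset.univ.filter fun i => f i = j).card = ν j

/-- Ordered product of regular variables along `f`. -/
def pz {k : ℕ} (f : Fin k → Fin 3) (q : Hq) : Hq :=
  ((List.ofFn f).map (fun i => z i q)).prod

lemma mem_S {k : ℕ} {ν : Fin 3 → ℕ} {f : Fin k → Fin 3} :
    f ∈ S k ν ↔ ∀ j, cnt f j = ν j := by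
  simp [S, cnt]

lemma Pp_eq {ν : Fin 3 → ℕ} {k : ℕ} (h : msum ν = k) (q : Hq) :
    Pp ν q = ((k.factorial : ℝ))⁻¹ • ∑ f ∈ S k ν, pz f q := by
  subst h; rfl

lemma msum_cnt {k : ℕ} (f : Fin k → Fin 3) : msum (cnt f) = k := by
  have h := Finset.card_eq_sum_card_fiberwise
    (f := f) (s := Finset.univ) (t := Finset.univ) (fun x _ => Finset.mem_univ _)
  simp only [Finset.card_univ, Fintype.card_fin, Fin.sum_univ_three] at h
  simp only [msum, cnt]
  omega

lemma cnt_append {m k : ℕ} (g : Fin m → Fin 3) (h : Fin k → Fin 3) (j : Fin 3) :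
    cnt (Fin.append g h) j = cnt g j + cnt h j := by
  simp only [cnt, Finset.card_filter, Fin.sum_univ_add, Fin.append_left, Fin.append_right]

lemma pz_append {m k : ℕ} (g : Fin m → Fin 3) (h : Fin k → Fin 3) (q : Hq) :
    pz (Fin.append g h) q = pz g q * pz h q := by
  simp [pz, List.ofFn_fin_append]

/-- Key combinatorial bijection. -/
lemma key {m k : ℕ} (hk : 0 < k) (ν : Fin 3 → ℕ) (hν : msum ν = m + k) (q : Hq) :
    ∑ μ ∈ (Finset.Iic ν).filter (fun μ => μ ≠ ν ∧ msum μ = m),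
      ∑ p ∈ S m μ ×ˢ S k (ν - μ), pz p.1 q * pz p.2 q
      = ∑ f ∈ S (m + k) ν, pz f q := by
  rw [Finset.sum_sigma']
  refine Finset.sum_nbij' (fun p => Fin.append p.2.1 p.2.2)
    (fun f => ⟨cnt (fun i => f (Fin.castAdd k i)),
      (fun i => f (Fin.castAdd k i), fun i => f (Fin.natAdd m i))⟩)
    ?_ ?_ ?_ ?_ ?_
  · rintro ⟨μ, g, h⟩ hp
    simp only [Finset.mem_sigma, Finset.mem_filter, Finset.mem_Iic, Finset.mem_product] at hp
    obtain ⟨⟨hle, _, _⟩, hg, hh⟩ := hp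
    rw [mem_S] at hg hh ⊢
    intro j
    have hlj : μ j ≤ ν j := hle j
    show cnt (Fin.append g h) j = ν j
    rw [cnt_append, hg j, hh j]
    have hsub : (ν - μ) j = ν j - μ j := rfl
    omega
  · intro f hf
    rw [mem_S] at hf
    have hcnt : ∀ j, cnt (fun i => f (Fin.castAdd k i)) j
        + cnt (fun i => f (Fin.natAdd m i)) j = ν j := by
      intro j
      rw [← cnt_append, Fin.append_castAdd_natAdd, hf]
    simp only [Finset.mem_sigma, Finset.mem_filter, Finset.mem_Iic, Finset.mem_product]
    refine ⟨⟨Pi.le_def.mpr fun j => ?_, fun hEq => ?_, msum_cnt _⟩,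
      mem_S.2 fun j => rfl, mem_S.2 fun j => ?_⟩
    · have := hcnt j; omega
    · have h1 := msum_cnt (fun i => f (Fin.castAdd k i))
      rw [hEq, hν] at h1
      omega
    · have := hcnt j
      have hsub : (ν - cnt fun i => f (Fin.castAdd k i)) j
          = ν j - cnt (fun i => f (Fin.castAdd k i)) j := rfl
      omega
  · rintro ⟨μ, g, h⟩ hp
    simp only [Finset.mem_sigma, Finset.mem_filter, Finset.mem_Iic, Finset.mem_product] at hp
    obtain ⟨_, hg, hh⟩ := hp
    rw [mem_S] at hg
    have h1 : (fun i => Fin.append g h (Fin.castAdd k i)) = g := by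
      funext i; exact Fin.append_left g h i
    have h2 : (fun i => Fin.append g h (Fin.natAdd m i)) = h := by
      funext i; exact Fin.append_right g h i
    have hc' : cnt g = μ := funext fun j => hg j
    show (⟨cnt (fun i => Fin.append g h (Fin.castAdd k i)),
        (fun i => Fin.append g h (Fin.castAdd k i), fun i => Fin.append g h (Fin.natAdd m i))⟩
        : Σ _ : Fin 3 → ℕ, (Fin m → Fin 3) × (Fin k → Fin 3)) = ⟨μ, (g, h)⟩
    rw [h1, h2, hc']
  · intro f hf
    exact Fin.append_castAdd_natAdd
  · rintro ⟨μ, g, h⟩ hp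
    exact (pz_append g h q).symm

/-- Quaternionic binomial identity for the regular polynomials:
for `n > m > 0` and `|ν| = n`,
`Σ_{|μ| = m, μ < ν} P_μ(q) P_{ν-μ}(q) = binom(n,m) P_ν(q)`. -/
theorem quaternionic_binomial_identity (n m : ℕ) (hm : 0 < m) (hmn : m < n)
    (ν : Fin 3 → ℕ) (hν : msum ν = n) (q : Hq) :
    ∑ μ ∈ (Finset.Iic ν).filter (fun μ => μ ≠ ν ∧ msum μ = m),
      Pp μ q * Pp (ν - μ) q = (n.choose m : ℝ) • Pp ν q := by
  obtain ⟨k, rfl⟩ : ∃ k, n = m + k := ⟨n - m, by omega⟩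
  have hk : 0 < k := by omega
  have step : ∀ μ ∈ (Finset.Iic ν).filter (fun μ => μ ≠ ν ∧ msum μ = m),
      Pp μ q * Pp (ν - μ) q
        = ((m.factorial : ℝ)⁻¹ * (k.factorial : ℝ)⁻¹) •
            ∑ p ∈ S m μ ×ˢ S k (ν - μ), pz p.1 q * pz p.2 q := by
    intro μ hμ
    simp only [Finset.mem_filter, Finset.mem_Iic] at hμ
    obtain ⟨hle, _, hμm⟩ := hμ
    have hsub : msum (ν - μ) = k := by
      have h0 := hle 0; have h1 := hle 1; have h2 := hle 2
      simp only [msum, Pi.sub_apply] at *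
      omega
    rw [Pp_eq hμm q, Pp_eq hsub q, smul_mul_smul_comm, Finset.sum_mul_sum,
      ← Finset.sum_product']
  rw [Finset.sum_congr rfl step, ← Finset.smul_sum, key hk ν hν q, Pp_eq hν q, smul_smul]
  congr 1
  have hc : (m + k).choose m * m.factorial * k.factorial = (m + k).factorial := by
    have h := Nat.choose_mul_factorial_mul_factorial (Nat.le_add_right m k)
    simpa using h
  have hm' : (m.factorial : ℝ) ≠ 0 := Nat.cast_ne_zero.2 m.factorial_ne_zero
  have hk' : (k.factorial : ℝ) ≠ 0 := Nat.cast_ne_zero.2 k.factorial_ne_zero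
  have hn' : ((m + k).factorial : ℝ) ≠ 0 := Nat.cast_ne_zero.2 (m + k).factorial_ne_zero
  have : ((m + k).choose m : ℝ) * m.factorial * k.factorial = (m + k).factorial := by
    exact_mod_cast congrArg (Nat.cast : ℕ → ℝ) hc
  field_simp
  linarith [this]
end
end

section
/- For every multi-index ν ∈ ℕ³ with |ν| = n, the regular homogeneous polynomial P_ν satisfies the bound |P_ν(q)| ≤ (|z₁(q)|^{n₁}/n₁!)·(|z₂(q)|^{n₂}/n₂!)·(|z₃(q)|^{n₃}/n₃!) for all q ∈ ℍ. Moreover, for q = −i x₁ − j x₂ − k x₃ with all x_i > 0, equality holds. -/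
open Quaternion

noncomputable section

/-- The index set of the sum defining `Pp`. -/
def Sset (ν : Fin 3 → ℕ) : Finset (Fin (msum ν) → Fin 3) :=
  Finset.univ.filter
    (fun f : Fin (msum ν) → Fin 3 =>
      ∀ j, (Finset.univ.filter fun i => f i = j).card = ν j)

lemma Pp_def (ν : Fin 3 → ℕ) (q : Hq) :
    Pp ν q = ((msum ν).factorial : ℝ)⁻¹ •
      ∑ f ∈ Sset ν, ((List.ofFn f).map (fun i => z i q)).prod := rfl

lemma fin3_cases (v : Fin 3) : v = 0 ∨ v = 1 ∨ v = 2 := by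
  match v with
  | 0 => exact Or.inl rfl
  | 1 => exact Or.inr (Or.inl rfl)
  | 2 => exact Or.inr (Or.inr rfl)

/-- Fibers of the "indicator" function built from disjoint sets `A`, `B`. -/
lemma filter_ite_fibers {n : ℕ} (A B : Finset (Fin n)) (hd : ∀ i ∈ B, i ∉ A) :
    (Finset.univ.filter fun i =>
        (if i ∈ A then (0:Fin 3) else if i ∈ B then 1 else 2) = 0) = A ∧
    (Finset.univ.filter fun i =>
        (if i ∈ A then (0:Fin 3) else if i ∈ B then 1 else 2) = 1) = B ∧
    (Finset.univ.filter fun i =>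
        (if i ∈ A then (0:Fin 3) else if i ∈ B then 1 else 2) = 2) = (A ∪ B)ᶜ := by
  refine ⟨?_, ?_, ?_⟩ <;> ext i <;>
    simp only [Finset.mem_filter, Finset.mem_univ, true_and, Finset.mem_compl,
      Finset.mem_union] <;>
    (by_cases hiA : i ∈ A
     · by_cases hiB : i ∈ B
       · exact absurd hiA (hd i hiB)
       · simp [hiA, hiB]
     · by_cases hiB : i ∈ B
       · simp [hiA, hiB]
       · simp [hiA, hiB])

/-- Cardinality of `Sset` : the multinomial coefficient identity. -/
lemma card_Sset (ν : Fin 3 → ℕ) :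
    (Sset ν).card * ((ν 0).factorial * ((ν 1).factorial * (ν 2).factorial))
      = (msum ν).factorial := by
  classical
  set n := msum ν with hn
  set T : Finset ((_ : Finset (Fin n)) × Finset (Fin n)) :=
    (Finset.powersetCard (ν 0) (Finset.univ : Finset (Fin n))).sigma
      (fun A => Finset.powersetCard (ν 1) Aᶜ) with hT
  have key : (Sset ν).card = T.card := by
    refine Finset.card_bij'
      (fun f _ => ⟨Finset.univ.filter fun i => f i = 0,
                   Finset.univ.filter fun i => f i = 1⟩)
      (fun p _ => fun i => if i ∈ p.1 then 0 else if i ∈ p.2 then 1 else 2)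
      ?_ ?_ ?_ ?_
    · intro f hf
      simp only [Sset, Finset.mem_filter, Finset.mem_univ, true_and] at hf
      simp only [hT, Finset.mem_sigma, Finset.mem_powersetCard]
      refine ⟨⟨Finset.subset_univ _, hf 0⟩, ?_, hf 1⟩
      intro i hi
      simp only [Finset.mem_filter, Finset.mem_univ, true_and] at hi
      simp only [Finset.mem_compl, Finset.mem_filter, Finset.mem_univ, true_and, hi]
      decide
    · rintro ⟨A, B⟩ hp
      simp only [hT, Finset.mem_sigma, Finset.mem_powersetCard] at hp
      obtain ⟨⟨-, hA⟩, hBsub, hB⟩ := hp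
      have hABdisj : ∀ i ∈ B, i ∉ A := fun i hi => Finset.mem_compl.mp (hBsub hi)
      obtain ⟨h0, h1, h2⟩ := filter_ite_fibers A B hABdisj
      simp only [Sset, Finset.mem_filter, Finset.mem_univ, true_and]
      intro j
      rcases fin3_cases j with h | h | h <;> subst h
      · rw [h0, hA]
      · rw [h1, hB]
      · rw [h2, Finset.card_compl,
          Finset.card_union_of_disjoint
            (Finset.disjoint_left.mpr (fun i hi hi' => hABdisj i hi' hi)),
          hA, hB, Fintype.card_fin]
        simp only [hn, msum]; omega
    · intro f hf
      funext i
      rcases fin3_cases (f i) with h | h | h <;>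
        simp [h]
    · rintro ⟨A, B⟩ hp
      simp only [hT, Finset.mem_sigma, Finset.mem_powersetCard] at hp
      obtain ⟨⟨-, hA⟩, hBsub, hB⟩ := hp
      have hABdisj : ∀ i ∈ B, i ∉ A := fun i hi => Finset.mem_compl.mp (hBsub hi)
      obtain ⟨h0, h1, -⟩ := filter_ite_fibers A B hABdisj
      simp only [h0, h1]
  have hTcard : T.card = n.choose (ν 0) * (n - ν 0).choose (ν 1) := by
    rw [hT, Finset.card_sigma]
    have : ∀ A ∈ Finset.powersetCard (ν 0) (Finset.univ : Finset (Fin n)),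
        (Finset.powersetCard (ν 1) Aᶜ).card = (n - ν 0).choose (ν 1) := by
      intro A hA
      rw [Finset.card_powersetCard, Finset.card_compl, Fintype.card_fin,
        Finset.mem_powersetCard_univ.mp hA]
    rw [Finset.sum_congr rfl this, Finset.sum_const, Finset.card_powersetCard,
      Finset.card_univ, Fintype.card_fin, smul_eq_mul]
  have hν0 : ν 0 ≤ n := by simp only [hn, msum]; omega
  have hsub : n - ν 0 = ν 1 + ν 2 := by simp only [hn, msum]; omega
  have key1 : (ν 1 + ν 2).choose (ν 1) * (ν 1).factorial * (ν 2).factorial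
      = (ν 1 + ν 2).factorial := by
    have := Nat.choose_mul_factorial_mul_factorial (Nat.le_add_right (ν 1) (ν 2))
    simpa using this
  have key2 : n.choose (ν 0) * (ν 0).factorial * (ν 1 + ν 2).factorial
      = n.factorial := by
    have := Nat.choose_mul_factorial_mul_factorial hν0
    rwa [hsub] at this
  rw [key, hTcard, hsub]
  calc n.choose (ν 0) * (ν 1 + ν 2).choose (ν 1) *
        ((ν 0).factorial * ((ν 1).factorial * (ν 2).factorial))
      = n.choose (ν 0) * (ν 0).factorial *
        ((ν 1 + ν 2).choose (ν 1) * (ν 1).factorial * (ν 2).factorial) := by ring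
    _ = n.choose (ν 0) * (ν 0).factorial * (ν 1 + ν 2).factorial := by rw [key1]
    _ = n.factorial := key2

/-- Fiberwise product : if `f ∈ Sset ν` then products over `Fin (msum ν)` factor. -/
lemma prod_comp_eq (ν : Fin 3 → ℕ) {f : Fin (msum ν) → Fin 3} (hf : f ∈ Sset ν)
    (w : Fin 3 → ℝ) : ∏ i, w (f i) = ∏ j, w j ^ ν j := by
  classical
  simp only [Sset, Finset.mem_filter, Finset.mem_univ, true_and] at hf
  rw [← Finset.prod_fiberwise_of_maps_to (fun i _ => Finset.mem_univ (f i))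
    (fun i => w (f i))]
  refine Finset.prod_congr rfl fun j _ => ?_
  calc ∏ i ∈ Finset.univ.filter fun i => f i = j, w (f i)
      = ∏ i ∈ Finset.univ.filter fun i => f i = j, w j :=
        Finset.prod_congr rfl fun i hi => by
          rw [(Finset.mem_filter.mp hi).2]
    _ = w j ^ ν j := by rw [Finset.prod_const, hf j]

/-- Bound `|P_ν(q)| ≤ Π_i |z_i(q)|^{n_i}/n_i!`, with equality for
`q = -i x₁ - j x₂ - k x₃` with all `x_i > 0`. -/
theorem Pp_norm_le_and_eq (ν : Fin 3 → ℕ) :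
    (∀ q : Hq, ‖Pp ν q‖ ≤ ∏ i : Fin 3, ‖z i q‖ ^ ν i / (ν i).factorial) ∧
    (∀ x : Fin 3 → ℝ, (∀ i, 0 < x i) →
      ‖Pp ν (-(x 0 • e 1 + x 1 • e 2 + x 2 • e 3))‖
        = ∏ i : Fin 3, ‖z i (-(x 0 • e 1 + x 1 • e 2 + x 2 • e 3))‖ ^ ν i / (ν i).factorial) := by
  classical
  set n := msum ν with hn
  have hfne : (n.factorial : ℝ) ≠ 0 := by positivity
  have hν0ne : ((ν 0).factorial : ℝ) ≠ 0 := by positivity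
  have hν1ne : ((ν 1).factorial : ℝ) ≠ 0 := by positivity
  have hν2ne : ((ν 2).factorial : ℝ) ≠ 0 := by positivity
  have hC : ((Sset ν).card : ℝ) *
      (((ν 0).factorial : ℝ) * (((ν 1).factorial : ℝ) * ((ν 2).factorial : ℝ)))
      = (n.factorial : ℝ) := by
    exact_mod_cast congrArg (Nat.cast : ℕ → ℝ) (card_Sset ν)
  constructor
  · intro q
    have step1 : ‖Pp ν q‖ ≤ (n.factorial : ℝ)⁻¹ *
        ∑ f ∈ Sset ν, ‖((List.ofFn f).map (fun i => z i q)).prod‖ := by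
      rw [Pp_def, norm_smul]
      gcongr
      · rw [Real.norm_eq_abs, abs_of_nonneg (by positivity)]
      · exact norm_sum_le _ _
    have step2 : ∀ f ∈ Sset ν,
        ‖((List.ofFn f).map (fun i => z i q)).prod‖ ≤ ∏ j, ‖z j q‖ ^ ν j := by
      intro f hf
      calc ‖((List.ofFn f).map (fun i => z i q)).prod‖
          ≤ (((List.ofFn f).map (fun i => z i q)).map norm).prod :=
            List.norm_prod_le _
        _ = ∏ i, ‖z (f i) q‖ := by
            rw [List.map_ofFn, List.map_ofFn, List.prod_ofFn]; rfl
        _ = ∏ j, ‖z j q‖ ^ ν j := prod_comp_eq ν hf (fun j => ‖z j q‖)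
    have step3 : ∑ f ∈ Sset ν, ‖((List.ofFn f).map (fun i => z i q)).prod‖
        ≤ ((Sset ν).card : ℝ) * ∏ j, ‖z j q‖ ^ ν j := by
      calc ∑ f ∈ Sset ν, ‖((List.ofFn f).map (fun i => z i q)).prod‖
          ≤ ∑ _f ∈ Sset ν, ∏ j, ‖z j q‖ ^ ν j := Finset.sum_le_sum step2
        _ = ((Sset ν).card : ℝ) * ∏ j, ‖z j q‖ ^ ν j := by
            rw [Finset.sum_const, nsmul_eq_mul]
    have final : (n.factorial : ℝ)⁻¹ * (((Sset ν).card : ℝ) * ∏ j, ‖z j q‖ ^ ν j)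
        = ∏ i : Fin 3, ‖z i q‖ ^ ν i / (ν i).factorial := by
      rw [Fin.prod_univ_three, Fin.prod_univ_three]
      field_simp
      linear_combination (‖z 0 q‖ ^ ν 0 * ‖z 1 q‖ ^ ν 1 * ‖z 2 q‖ ^ ν 2) * hC
    calc ‖Pp ν q‖ ≤ (n.factorial : ℝ)⁻¹ *
        ∑ f ∈ Sset ν, ‖((List.ofFn f).map (fun i => z i q)).prod‖ := step1
      _ ≤ (n.factorial : ℝ)⁻¹ * (((Sset ν).card : ℝ) * ∏ j, ‖z j q‖ ^ ν j) := by
          gcongr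
      _ = ∏ i : Fin 3, ‖z i q‖ ^ ν i / (ν i).factorial := final
  · intro x hx
    set q : Hq := -(x 0 • e 1 + x 1 • e 2 + x 2 • e 3) with hq
    have hz : ∀ i : Fin 3, z i q = ((x i : ℝ) : Hq) := by
      intro i
      have hre : q.re = 0 := by
        simp [hq, e]
        change -(x 2 * 0) + (-(x 1 * 0) + -(x 0 * 0)) = 0
        ring
      have hcoord : coord q i.succ = -(x i) := by
        rcases fin3_cases i with h | h | h <;> subst h <;>
          simp [hq, coord, e]
        · change -(x 2 * 0) + (-(x 1 * 0) + -(x 0 * 1)) = -x 0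
          ring
        · change -(x 2 * 0) + (-(x 1 * 1) + -(x 0 * 0)) = -x 1
          ring
        · change -(x 2 * 1) + (-(x 1 * 0) + -(x 0 * 0)) = -x 2
          ring
      rw [z, hre, hcoord, zero_smul, zero_sub, neg_smul, neg_neg,
        ← Quaternion.coe_one, Quaternion.smul_coe, mul_one]
    have hzn : ∀ i : Fin 3, ‖z i q‖ = x i := by
      intro i
      rw [hz i, Quaternion.norm_coe, Real.norm_eq_abs, abs_of_pos (hx i)]
    have hprod : ∀ f ∈ Sset ν,
        ((List.ofFn f).map (fun i => z i q)).prod = ((∏ j, x j ^ ν j : ℝ) : Hq) := by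
      intro f hf
      have h1 : (List.ofFn f).map (fun i => z i q)
          = (List.ofFn (fun i => x (f i))).map (fun r : ℝ => (r : Hq)) := by
        rw [List.map_ofFn, List.map_ofFn]
        congr 1
        funext i
        exact hz (f i)
      have h2 : ((List.ofFn (fun i => x (f i))).map
          (fun r : ℝ => (r : Hq))).prod = (((List.ofFn (fun i => x (f i))).prod : ℝ) : Hq) := by
        rw [← Quaternion.algebraMap_def]
        exact (map_list_prod (algebraMap ℝ Hq) _).symm
      rw [h1, h2, List.prod_ofFn, prod_comp_eq ν hf]
    have hsum : ∑ f ∈ Sset ν, ((List.ofFn f).map (fun i => z i q)).prod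
        = ((((Sset ν).card : ℝ) * ∏ j, x j ^ ν j : ℝ) : Hq) := by
      rw [Finset.sum_congr rfl hprod, Finset.sum_const, nsmul_eq_mul]
      norm_cast
    have hPp : Pp ν q = ((( (n.factorial : ℝ)⁻¹ * (((Sset ν).card : ℝ) *
        ∏ j, x j ^ ν j) : ℝ)) : Hq) := by
      rw [Pp_def, hsum, Quaternion.smul_coe]
    have hxprod_nonneg : (0:ℝ) ≤ ∏ j, x j ^ ν j :=
      Finset.prod_nonneg fun j _ => pow_nonneg (hx j).le _
    have hnonneg : (0:ℝ) ≤ (n.factorial : ℝ)⁻¹ *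
        (((Sset ν).card : ℝ) * ∏ j, x j ^ ν j) :=
      mul_nonneg (inv_nonneg.mpr (Nat.cast_nonneg _)) (mul_nonneg (Nat.cast_nonneg _) hxprod_nonneg)
    rw [hPp, Quaternion.norm_coe, Real.norm_eq_abs, abs_of_nonneg hnonneg]
    simp only [Fin.prod_univ_three, hzn]
    field_simp
    linear_combination (x 0 ^ ν 0 * x 1 ^ ν 1 * x 2 ^ ν 2) * hC

end
end

section
/- A product of the pairwise-noncommuting regular variables: for any choice of indices i₁,…,i_n ∈ {1,2,3}, the function q ↦ (symmetrized product) P_ν(q) with ν the content of (i₁,…,i_n) is left-regular, i.e., ∂̄_l P_ν = 0. Consequently every P_ν (ν ∈ ℕ³) is left-regular on ℍ. -/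
open Quaternion

noncomputable section

/-- The Cauchy–Riemann–Fueter operator (left version):
`∂̄_l f = (1/2)(∂f/∂t + i ∂f/∂x₁ + j ∂f/∂x₂ + k ∂f/∂x₃)`. -/
def CRl (f : Hq → Hq) (q : Hq) : Hq :=
  (1/2 : ℝ) • (fderiv ℝ f q 1 + e 1 * fderiv ℝ f q (e 1)
    + e 2 * fderiv ℝ f q (e 2) + e 3 * fderiv ℝ f q (e 3))

/-- The Cauchy–Riemann–Fueter operator (right version):
`∂̄_r f = (1/2)(∂f/∂t + (∂f/∂x₁)i + (∂f/∂x₂)j + (∂f/∂x₃)k)`. -/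
def CRr (f : Hq → Hq) (q : Hq) : Hq :=
  (1/2 : ℝ) • (fderiv ℝ f q 1 + fderiv ℝ f q (e 1) * e 1
    + fderiv ℝ f q (e 2) * e 2 + fderiv ℝ f q (e 3) * e 3)

/-- commutator of units -/
def cc (i m : Fin 3) : Hq := e i.succ * e m.succ - e m.succ * e i.succ

lemma cc_symm (i m : Fin 3) : cc m i = - cc i m := by simp only [cc]; abel

lemma cc_self (i : Fin 3) : cc i i = 0 := by simp [cc]

lemma z_comm (i m : Fin 3) (q : Hq) :
    z i q * e m.succ - e m.succ * z i q = q.re • cc i m := by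
  simp only [z, cc, sub_mul, mul_sub, smul_mul_assoc, mul_smul_comm, one_mul, mul_one,
    smul_sub]
  abel

def Φ (w : List (Fin 3)) (q : Hq) : Hq := (w.map (fun i => z i q)).prod

lemma Φ_nil (q : Hq) : Φ [] q = 1 := rfl
lemma Φ_cons (i : Fin 3) (w : List (Fin 3)) (q : Hq) : Φ (i :: w) q = z i q * Φ w q := rfl

/-- commutator expansion -/
lemma comm_expand (w : List (Fin 3)) (q : Hq) (m : Fin 3) :
    Φ w q * e m.succ - e m.succ * Φ w q =
      ∑ l : Fin w.length,
        Φ (w.take l) q * (q.re • cc w[l] m) * Φ (w.drop (l+1)) q := by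
  induction w with
  | nil => simp [Φ_nil]
  | cons i u ih =>
    have hs := Fin.sum_univ_succ (n := u.length)
      (f := fun l : Fin (u.length + 1) =>
        Φ ((i::u).take ↑l) q * (q.re • cc ((i::u)[(l:ℕ)]'(l.isLt)) m) * Φ ((i::u).drop (↑l+1)) q)
    refine Eq.trans ?_ hs.symm
    simp only [Φ_cons, List.take_succ_cons, List.take_zero, List.getElem_cons_zero,
      Fin.val_succ, Fin.val_zero, List.getElem_cons_succ, List.drop_succ_cons,
      List.drop_zero, Φ_nil, one_mul, Fin.coe_castSucc]
    have h2 : z i q * Φ u q * e m.succ - e m.succ * (z i q * Φ u q) =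
        z i q * (Φ u q * e m.succ - e m.succ * Φ u q)
          + (z i q * e m.succ - e m.succ * z i q) * Φ u q := by noncomm_ring
    rw [h2, ih, z_comm, Finset.mul_sum, add_comm]
    congr 1
    refine Finset.sum_congr rfl fun l _ => ?_
    simp [Φ_cons, mul_assoc]

def zL (i : Fin 3) : Hq →L[ℝ] Hq :=
  LinearMap.toContinuousLinearMap
  { toFun := z i
    map_add' := by intro a b; fin_cases i <;> simp [z, coord] <;> module
    map_smul' := by intro r a; fin_cases i <;> simp [z, coord] <;> module }

lemma zL_apply (i : Fin 3) (v : Hq) : zL i v = z i v := rfl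

lemma hasFDerivAt_z (i : Fin 3) (q : Hq) : HasFDerivAt (z i) (zL i) q :=
  (zL i).hasFDerivAt

lemma z_one (i : Fin 3) : z i 1 = e i.succ := by
  fin_cases i <;> simp [z, coord, e] <;> exact one_smul _ _

lemma z_e (i j : Fin 3) : z i (e j.succ) = -(if i = j then (1:Hq) else 0) := by
  fin_cases i <;> fin_cases j <;> simp [z, coord, e] <;> exact zero_smul _ _

lemma key_dir (i : Fin 3) (A B : Hq) :
    A * (z i 1 * B) + e 1 * (A * (z i (e 1) * B)) + e 2 * (A * (z i (e 2) * B))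
      + e 3 * (A * (z i (e 3) * B)) = (A * e i.succ - e i.succ * A) * B := by
  have h1 : e 1 = e (0:Fin 3).succ := rfl
  have h2 : e 2 = e (1:Fin 3).succ := rfl
  have h3 : e 3 = e (2:Fin 3).succ := rfl
  rw [z_one, h1, h2, h3, z_e, z_e, z_e]
  fin_cases i <;> simp <;> noncomm_ring

lemma hasFDerivAt_Φ (w : List (Fin 3)) (q : Hq) :
    HasFDerivAt (Φ w)
      (∑ k : Fin w.length, Φ (w.take ↑k) q •
        (zL w[(k:ℕ)]).smulRight (Φ (w.drop (↑k+1)) q)) q := by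
  have hD := HasFDerivAt.list_prod' (f := z) (f' := fun i => zL i) (l := w) (x := q)
    (fun i _ => hasFDerivAt_z i q)
  exact hD

lemma diffAt_Φ (w : List (Fin 3)) (q : Hq) : DifferentiableAt ℝ (Φ w) q :=
  (hasFDerivAt_Φ w q).differentiableAt

lemma CRl_Φ (w : List (Fin 3)) (q : Hq) :
    CRl (Φ w) q = (1/2 : ℝ) • ∑ k : Fin w.length,
      (Φ (w.take ↑k) q * e (w[(k:ℕ)]).succ - e (w[(k:ℕ)]).succ * Φ (w.take ↑k) q)
        * Φ (w.drop (↑k+1)) q := by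
  have hf : fderiv ℝ (Φ w) q = ∑ k : Fin w.length, Φ (w.take ↑k) q •
      (zL w[(k:ℕ)]).smulRight (Φ (w.drop (↑k+1)) q) := (hasFDerivAt_Φ w q).fderiv
  rw [CRl, hf]
  simp only [ContinuousLinearMap.sum_apply, ContinuousLinearMap.smul_apply,
    ContinuousLinearMap.smulRight_apply, zL_apply, smul_eq_mul, Finset.mul_sum,
    ← Finset.sum_add_distrib]
  congr 1
  refine Finset.sum_congr rfl fun k _ => ?_
  exact key_dir _ _ _

def TTF (n : ℕ) (f : Fin n → Fin 3) (q : Hq) (a b : Fin n) : Hq :=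
  Φ ((List.ofFn f).take ↑a) q * (q.re • cc (f a) (f b)) *
    Φ (((List.ofFn f).take ↑b).drop (↑a+1)) q * Φ ((List.ofFn f).drop (↑b+1)) q

def TT (n : ℕ) (f : Fin n → Fin 3) (q : Hq) (k l : ℕ) : Hq :=
  if h : l < k ∧ k < n then TTF n f q ⟨l, h.1.trans h.2⟩ ⟨k, h.2⟩ else 0

lemma CRl_ofFn (n : ℕ) (f : Fin n → Fin 3) (q : Hq) :
    CRl (Φ (List.ofFn f)) q
      = (1/2 : ℝ) • ∑ k ∈ Finset.range n, ∑ l ∈ Finset.range k, TT n f q k l := by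
  have hlen : (List.ofFn f).length = n := List.length_ofFn
  rw [CRl_Φ]
  congr 1
  have step1 : ∀ k : Fin (List.ofFn f).length,
      (Φ ((List.ofFn f).take ↑k) q * e ((List.ofFn f)[(k:ℕ)]).succ
        - e ((List.ofFn f)[(k:ℕ)]).succ * Φ ((List.ofFn f).take ↑k) q)
        * Φ ((List.ofFn f).drop (↑k+1)) q
      = ∑ l ∈ Finset.range ↑k, TT n f q ↑k l := by
    intro k
    have hk : (k : ℕ) < n := by simpa [hlen] using k.isLt
    have hlen2 : ((List.ofFn f).take ↑k).length = (k : ℕ) := by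
      simp [List.length_take, hlen]; omega
    rw [comm_expand, Finset.sum_mul]
    have step2 : ∀ l : Fin ((List.ofFn f).take ↑k).length,
        Φ (((List.ofFn f).take ↑k).take ↑l) q
          * (q.re • cc (((List.ofFn f).take ↑k)[(l:ℕ)]) ((List.ofFn f)[(k:ℕ)]))
          * Φ (((List.ofFn f).take ↑k).drop (↑l+1)) q
          * Φ ((List.ofFn f).drop (↑k+1)) q
        = TT n f q ↑k ↑l := by
      intro l
      have hl : (l : ℕ) < (k : ℕ) := by simpa [hlen2] using l.isLt
      rw [TT, dif_pos ⟨hl, hk⟩, TTF, List.take_take, min_eq_left hl.le,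
        List.getElem_take, List.getElem_ofFn, List.getElem_ofFn]
    refine Eq.trans (Finset.sum_congr rfl (fun l _ => step2 l)) ?_
    rw [Fin.sum_univ_eq_sum_range (fun l => TT n f q ↑k l), hlen2]
  refine Eq.trans (Finset.sum_congr rfl (fun k _ => step1 k)) ?_
  rw [Fin.sum_univ_eq_sum_range (fun k => ∑ l ∈ Finset.range k, TT n f q k l), hlen]

lemma getElem_ofFn_swap {n : ℕ} (f : Fin n → Fin 3) (a b : Fin n) (m : ℕ)
    (hm : m < (List.ofFn (f ∘ Equiv.swap a b)).length) (hma : m ≠ ↑a) (hmb : m ≠ ↑b) :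
    (List.ofFn (f ∘ Equiv.swap a b))[m] = (List.ofFn f)[m]'(by simpa using hm) := by
  rw [List.getElem_ofFn, List.getElem_ofFn]
  simp only [Function.comp_apply]
  congr 1
  apply Equiv.swap_apply_of_ne_of_ne
  · exact fun h => hma (by simpa using congrArg Fin.val h)
  · exact fun h => hmb (by simpa using congrArg Fin.val h)

lemma ofFn_swap_take {n : ℕ} (f : Fin n → Fin 3) (a b : Fin n) (hab : (a:ℕ) < b) :
    (List.ofFn (f ∘ Equiv.swap a b)).take ↑a = (List.ofFn f).take ↑a := by
  apply List.ext_getElem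
  · simp
  · intro m h1 h2
    have hm : m < (a:ℕ) := by simpa using h1
    rw [List.getElem_take, List.getElem_take, getElem_ofFn_swap f a b m _ (by omega) (by omega)]

lemma ofFn_swap_middle {n : ℕ} (f : Fin n → Fin 3) (a b : Fin n) (hab : (a:ℕ) < b) :
    ((List.ofFn (f ∘ Equiv.swap a b)).take ↑b).drop (↑a+1)
      = ((List.ofFn f).take ↑b).drop (↑a+1) := by
  apply List.ext_getElem
  · simp
  · intro m h1 h2
    have hm : ↑a + 1 + m < (b:ℕ) := by
      simp only [List.length_drop, List.length_take, List.length_ofFn] at h1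
      omega
    rw [List.getElem_drop, List.getElem_drop, List.getElem_take, List.getElem_take,
      getElem_ofFn_swap f a b _ _ (by omega) (by omega)]

lemma ofFn_swap_drop {n : ℕ} (f : Fin n → Fin 3) (a b : Fin n) (hab : (a:ℕ) < b) :
    (List.ofFn (f ∘ Equiv.swap a b)).drop (↑b+1) = (List.ofFn f).drop (↑b+1) := by
  apply List.ext_getElem
  · simp
  · intro m h1 h2
    rw [List.getElem_drop, List.getElem_drop,
      getElem_ofFn_swap f a b _ _ (by omega) (by omega)]

lemma TTF_swap {n : ℕ} (f : Fin n → Fin 3) {a b : Fin n} (hab : (a:ℕ) < (b:ℕ)) (q : Hq) :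
    TTF n (f ∘ Equiv.swap a b) q a b = - TTF n f q a b := by
  rw [TTF, TTF, ofFn_swap_take f a b hab, ofFn_swap_middle f a b hab, ofFn_swap_drop f a b hab]
  simp only [Function.comp_apply, Equiv.swap_apply_left, Equiv.swap_apply_right]
  rw [cc_symm (f a) (f b)]
  simp only [smul_neg, mul_neg, neg_mul]

lemma TTF_zero {n : ℕ} (f : Fin n → Fin 3) (q : Hq) {a b : Fin n} (h : f a = f b) :
    TTF n f q a b = 0 := by
  rw [TTF, h, cc_self]
  simp

lemma sum_TT_zero {n : ℕ} (S : Finset (Fin n → Fin 3))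
    (hS : ∀ f ∈ S, ∀ a b : Fin n, f ∘ Equiv.swap a b ∈ S) (q : Hq) (k l : ℕ)
    (hlk : l < k) (hk : k < n) :
    ∑ f ∈ S, TT n f q k l = 0 := by
  have hh : l < k ∧ k < n := ⟨hlk, hk⟩
  refine Finset.sum_involution
    (fun f _ => f ∘ Equiv.swap ⟨l, hh.1.trans hh.2⟩ ⟨k, hh.2⟩) ?_ ?_
    (fun f hf => hS f hf _ _) ?_
  · intro f _
    show TT n f q k l + TT n (f ∘ Equiv.swap ⟨l, hh.1.trans hh.2⟩ ⟨k, hh.2⟩) q k l = 0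
    rw [TT, TT, dif_pos hh, dif_pos hh,
      TTF_swap (a := ⟨l, hh.1.trans hh.2⟩) (b := ⟨k, hh.2⟩) f hlk q]
    exact add_neg_cancel _
  · intro f _ hne heq
    apply hne
    have hfe : f ⟨l, hh.1.trans hh.2⟩ = f ⟨k, hh.2⟩ := by
      have h2 := congrFun heq ⟨l, hh.1.trans hh.2⟩
      simp only [Function.comp_apply, Equiv.swap_apply_left] at h2
      exact h2.symm
    rw [TT, dif_pos hh]
    exact TTF_zero f q hfe
  · intro f hf
    funext i
    simp [Function.comp, Equiv.swap_apply_self]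

lemma CRl_const_smul_sum {ι : Type*} (s : Finset ι) (F : ι → Hq → Hq)
    (D : ι → Hq →L[ℝ] Hq) (q : Hq) (r : ℝ)
    (hD : ∀ a ∈ s, HasFDerivAt (F a) (D a) q) :
    CRl (fun x => r • ∑ a ∈ s, F a x) q = r • ∑ a ∈ s, CRl (F a) q := by
  have h : HasFDerivAt (fun x => r • ∑ a ∈ s, F a x) (r • ∑ a ∈ s, D a) q :=
    (HasFDerivAt.fun_sum hD).const_smul r
  have h2 : r • ∑ a ∈ s, CRl (F a) q
      = r • ∑ a ∈ s, (1/2:ℝ) • (D a 1 + e 1 * D a (e 1) + e 2 * D a (e 2)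
          + e 3 * D a (e 3)) := by
    congr 1
    exact Finset.sum_congr rfl fun a ha => by rw [CRl, (hD a ha).fderiv]
  rw [CRl, h.fderiv, h2]
  simp only [ContinuousLinearMap.smul_apply, ContinuousLinearMap.sum_apply,
    mul_smul_comm, Finset.mul_sum, Finset.smul_sum, smul_smul, smul_add]
  rw [← Finset.sum_add_distrib, ← Finset.sum_add_distrib, ← Finset.sum_add_distrib]
  refine Finset.sum_congr rfl fun a ha => ?_
  rw [mul_comm]

lemma content_swap {n : ℕ} (ν : Fin 3 → ℕ) (f : Fin n → Fin 3)
    (hf : ∀ j, (Finset.univ.filter fun i => f i = j).card = ν j) (a b : Fin n) :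
    ∀ j, (Finset.univ.filter fun i => (f ∘ Equiv.swap a b) i = j).card = ν j := by
  intro j; rw [← hf j]
  apply Finset.card_bij (fun i _ => Equiv.swap a b i)
  · intro i hi
    simp only [Finset.mem_filter, Finset.mem_univ, true_and, Function.comp_apply] at hi ⊢
    exact hi
  · intro i _ i' _ h
    exact (Equiv.swap a b).injective h
  · intro i hi
    refine ⟨Equiv.swap a b i, ?_, by simp⟩
    simp only [Finset.mem_filter, Finset.mem_univ, true_and, Function.comp_apply,
      Equiv.swap_apply_self] at hi ⊢
    exact hi

theorem main (ν : Fin 3 → ℕ) (q : Hq) : CRl (Pp ν) q = 0 := by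
  set n := msum ν with hn
  set S : Finset (Fin n → Fin 3) := Finset.univ.filter
    (fun f : Fin n → Fin 3 =>
      ∀ j, (Finset.univ.filter fun i => f i = j).card = ν j) with hS
  have h0 : CRl (Pp ν) q = ((n.factorial : ℝ))⁻¹ • ∑ f ∈ S, CRl (Φ (List.ofFn f)) q :=
    CRl_const_smul_sum S (fun f => Φ (List.ofFn f)) _ q ((n.factorial : ℝ))⁻¹
      (fun f _ => hasFDerivAt_Φ (List.ofFn f) q)
  rw [h0]
  have hcl : ∀ f ∈ S, ∀ a b : Fin n, f ∘ Equiv.swap a b ∈ S := by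
    intro f hf a b
    rw [hS, Finset.mem_filter] at hf ⊢
    exact ⟨Finset.mem_univ _, content_swap ν f hf.2 a b⟩
  have hz : ∑ f ∈ S, CRl (Φ (List.ofFn f)) q = 0 := by
    refine Eq.trans (Finset.sum_congr rfl (fun f _ => CRl_ofFn n f q)) ?_
    rw [← Finset.smul_sum, Finset.sum_comm]
    have : ∀ k ∈ Finset.range n, (∑ f ∈ S, ∑ l ∈ Finset.range k, TT n f q k l) = 0 := by
      intro k hk
      rw [Finset.sum_comm]
      refine Finset.sum_eq_zero fun l hl => ?_
      exact sum_TT_zero S hcl q k l (Finset.mem_range.mp hl) (Finset.mem_range.mp hk)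
    rw [Finset.sum_congr rfl this]
    simp
  rw [hz, smul_zero]

/-- For any choice of indices `i₁,…,i_n ∈ {1,2,3}`, the symmetrized product `P_ν`
with `ν` the content of `(i₁,…,i_n)` is left-regular; consequently every `P_ν`
(`ν ∈ ℕ³`) is left-regular on all of `ℍ`. -/
theorem Pp_left_regular :
    (∀ (n : ℕ) (t : Fin n → Fin 3) (q : Hq),
      CRl (Pp (fun j => (Finset.univ.filter fun i => t i = j).card)) q = 0) ∧
    (∀ (ν : Fin 3 → ℕ) (q : Hq), CRl (Pp ν) q = 0) := by
  exact ⟨fun n t q => main _ q, fun ν q => main ν q⟩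
end
end

section
/- If g is right-regular and f is left-regular on an open set U ⊆ ℍ, then the ℍ-valued 3-form g · Dq · f is closed: d(g Dq f) = 0. -/
open Quaternion

noncomputable section

/-- The elementary real 3-form `dx_a ∧ dx_b ∧ dx_c` evaluated on three tangent vectors. -/
def w3 (a b c : Fin 4) (v : Fin 3 → Hq) : ℝ :=
  Matrix.det (Matrix.of fun i j => coord (v i) (![a, b, c] j))

/-- The canonical quaternionic 3-form
`Dq = dx₁∧dx₂∧dx₃ - i dt∧dx₂∧dx₃ + j dt∧dx₁∧dx₃ - k dt∧dx₁∧dx₂`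
(coordinates `x₀ = t, x₁, x₂, x₃`), evaluated on tangent vectors. -/
def Dq3 (v : Fin 3 → Hq) : Hq :=
  w3 1 2 3 v • (1 : Hq) - w3 0 2 3 v • e 1 + w3 0 1 3 v • e 2 - w3 0 1 2 v • e 3

/-- Wedge product of an `ℍ`-valued 3-form with an `ℍ`-valued 1-form
(quaternion coefficients multiplied in order, shuffle convention). -/
def wedge31 (ω : (Fin 3 → Hq) → Hq) (θ : Hq → Hq) (v : Fin 4 → Hq) : Hq :=
  ∑ i : Fin 4, ((-1 : ℝ) ^ ((i : ℕ) + 1)) • (ω (fun j => v (i.succAbove j)) * θ (v i))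

/-- Exterior derivative of an `ℍ`-valued 3-form on `ℍ ≅ ℝ⁴`. -/
def extDer3 (ω : Hq → (Fin 3 → Hq) → Hq) (q : Hq) (v : Fin 4 → Hq) : Hq :=
  ∑ i : Fin 4, ((-1 : ℝ) ^ (i : ℕ)) •
    fderiv ℝ (fun p => ω p (fun j => v (i.succAbove j))) q (v i)

lemma sA0 : ∀ j : Fin 3, (0:Fin 4).succAbove j = ![1,2,3] j := by decide
lemma sA1 : ∀ j : Fin 3, (1:Fin 4).succAbove j = ![0,2,3] j := by decide
lemma sA2 : ∀ j : Fin 3, (2:Fin 4).succAbove j = ![0,1,3] j := by decide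
lemma sA3 : ∀ j : Fin 3, (3:Fin 4).succAbove j = ![0,1,2] j := by decide
lemma fs0 : Fin.succ (0:Fin 3) = (1:Fin 4) := rfl
lemma fs1 : Fin.succ (1:Fin 3) = (2:Fin 4) := rfl
lemma fs2 : Fin.succ (2:Fin 3) = (3:Fin 4) := rfl
lemma e_re (a : Fin 4) : (e a).re = ![1, 0, 0, 0] a := by fin_cases a <;> rfl
lemma e_imI (a : Fin 4) : (e a).imI = ![0, 1, 0, 0] a := by fin_cases a <;> rfl
lemma e_imJ (a : Fin 4) : (e a).imJ = ![0, 0, 1, 0] a := by fin_cases a <;> rfl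
lemma e_imK (a : Fin 4) : (e a).imK = ![0, 0, 0, 1] a := by fin_cases a <;> rfl

lemma det4 (M : Matrix (Fin 4) (Fin 4) ℝ) :
    M.det =
      M 0 0 * (M 1 1 * M 2 2 * M 3 3 - M 1 1 * M 2 3 * M 3 2 - M 1 2 * M 2 1 * M 3 3
        + M 1 2 * M 2 3 * M 3 1 + M 1 3 * M 2 1 * M 3 2 - M 1 3 * M 2 2 * M 3 1)
      - M 0 1 * (M 1 0 * M 2 2 * M 3 3 - M 1 0 * M 2 3 * M 3 2 - M 1 2 * M 2 0 * M 3 3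
        + M 1 2 * M 2 3 * M 3 0 + M 1 3 * M 2 0 * M 3 2 - M 1 3 * M 2 2 * M 3 0)
      + M 0 2 * (M 1 0 * M 2 1 * M 3 3 - M 1 0 * M 2 3 * M 3 1 - M 1 1 * M 2 0 * M 3 3
        + M 1 1 * M 2 3 * M 3 0 + M 1 3 * M 2 0 * M 3 1 - M 1 3 * M 2 1 * M 3 0)
      - M 0 3 * (M 1 0 * M 2 1 * M 3 2 - M 1 0 * M 2 2 * M 3 1 - M 1 1 * M 2 0 * M 3 2
        + M 1 1 * M 2 2 * M 3 0 + M 1 2 * M 2 0 * M 3 1 - M 1 2 * M 2 1 * M 3 0) := by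
  rw [Matrix.det_succ_row_zero]
  simp only [Fin.sum_univ_four, Matrix.det_fin_three, Matrix.submatrix_apply,
    sA0, sA1, sA2, sA3, fs0, fs1, fs2, Matrix.cons_val_zero, Matrix.cons_val_one,
    Matrix.head_cons, Matrix.cons_val_two, Matrix.tail_cons, Fin.val_zero, Fin.val_one,
    Fin.val_two, show ((3:Fin 4):ℕ) = 3 from rfl, pow_zero, pow_one, pow_succ, one_mul, neg_mul, neg_neg, mul_one]
  ring

lemma quat_decomp (q : Hq) : ∑ a : Fin 4, coord q a • e a = q := by
  simp [Fin.sum_univ_four, coord, e_re, e_imI, e_imJ, e_imK, Quaternion.ext_iff]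

set_option maxHeartbeats 1000000 in
lemma key_s7 (a : Fin 4) (v : Fin 4 → Hq) :
    ∑ i : Fin 4, ((-1 : ℝ) ^ (i : ℕ)) •
      (coord (v i) a • Dq3 (fun j => v (i.succAbove j))) =
    (Matrix.det (Matrix.of fun i j => coord (v i) j)) • e a := by
  rw [det4]
  fin_cases a <;>
  · simp only [Fin.sum_univ_four, Dq3, w3, Matrix.det_fin_three, Matrix.of_apply,
      sA0, sA1, sA2, sA3, Matrix.cons_val_zero, Matrix.cons_val_one, Matrix.head_cons,
      Matrix.cons_val_two, Matrix.tail_cons, Matrix.cons_val_three,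
      coord, Fin.val_zero, Fin.val_one, Fin.val_two,
      show ((3:Fin 4):ℕ) = 3 from rfl, pow_zero, pow_one, pow_succ, one_mul, neg_mul,
      neg_neg, mul_one, Fin.isValue]
    apply Quaternion.ext <;> norm_num [e_re, e_imI, e_imJ, e_imK, Matrix.cons_val_two,
      Matrix.cons_val_three, Matrix.tail_cons, Matrix.head_cons, Matrix.cons_val_one,
      Matrix.cons_val_zero] <;> try ring1

/-- If `g` is right-regular and `f` is left-regular on an open `U ⊆ ℍ`, then the
`ℍ`-valued 3-form `g · Dq · f` is closed: `d(g Dq f) = 0` on `U`. -/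
theorem gDqf_closed (U : Set Hq) (hU : IsOpen U) (f g : Hq → Hq)
    (hf : ∀ q ∈ U, DifferentiableAt ℝ f q) (hg : ∀ q ∈ U, DifferentiableAt ℝ g q)
    (hfreg : ∀ q ∈ U, CRl f q = 0) (hgreg : ∀ q ∈ U, CRr g q = 0) :
    ∀ q ∈ U, ∀ v : Fin 4 → Hq,
      extDer3 (fun p w => g p * Dq3 w * f p) q v = 0 := by
  intro q hq v
  have hfd := hf q hq
  have hgd := hg q hq
  set Gq : Fin 4 → Hq := fun a => fderiv ℝ g q (e a) with hGqdef
  set Fq : Fin 4 → Hq := fun a => fderiv ℝ f q (e a) with hFqdef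
  have hder : ∀ (C w : Hq),
      fderiv ℝ (fun p => g p * C * f p) q w
        = fderiv ℝ g q w * C * f q + g q * C * fderiv ℝ f q w := by
    intro C w
    have h := (hgd.hasFDerivAt.mul_const' C).mul' hfd.hasFDerivAt
    rw [show (fun p => g p * C * f p) = (fun y => g y * C) * f from rfl, h.fderiv]
    simp only [ContinuousLinearMap.add_apply, ContinuousLinearMap.smul_apply,
      ContinuousLinearMap.smulRight_apply, smul_eq_mul, mul_assoc, op_smul_eq_mul]
    exact add_comm _ _
  have hlin : ∀ (h : Hq → Hq) (w : Hq),
      fderiv ℝ h q w = ∑ a : Fin 4, coord w a • fderiv ℝ h q (e a) := by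
    intro h w
    conv_lhs => rw [← quat_decomp w]
    rw [map_sum]
    simp
  have he0 : e 0 = 1 := rfl
  have hGsum : ∑ a : Fin 4, Gq a * e a = 0 := by
    have h := hgreg q hq
    rw [CRr] at h
    rcases smul_eq_zero.mp h with h' | h'
    · norm_num at h'
    · rw [Fin.sum_univ_four, hGqdef]
      simpa [he0] using h'
  have hFsum : ∑ a : Fin 4, e a * Fq a = 0 := by
    have h := hfreg q hq
    rw [CRl] at h
    rcases smul_eq_zero.mp h with h' | h'
    · norm_num at h'
    · rw [Fin.sum_univ_four, hFqdef]
      simpa [he0] using h'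
  have step1 : extDer3 (fun p w => g p * Dq3 w * f p) q v
      = ∑ i : Fin 4, ((-1:ℝ)^(i:ℕ)) •
          ∑ a : Fin 4, (Gq a * (coord (v i) a • Dq3 (fun j => v (i.succAbove j))) * f q
            + g q * (coord (v i) a • Dq3 (fun j => v (i.succAbove j))) * Fq a) := by
    rw [extDer3]
    refine Finset.sum_congr rfl fun i _ => ?_
    congr 1
    rw [show (fun p => g p * Dq3 (fun j => v (i.succAbove j)) * f p)
          = fun p => g p * Dq3 (fun j => v (i.succAbove j)) * f p from rfl,
        hder (Dq3 fun j => v (i.succAbove j)) (v i), hlin g (v i), hlin f (v i)]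
    simp [Finset.sum_mul, Finset.mul_sum, smul_mul_assoc, mul_smul_comm,
      Finset.sum_add_distrib]
    rfl
  have step2 : (∑ i : Fin 4, ((-1:ℝ)^(i:ℕ)) •
          ∑ a : Fin 4, (Gq a * (coord (v i) a • Dq3 (fun j => v (i.succAbove j))) * f q
            + g q * (coord (v i) a • Dq3 (fun j => v (i.succAbove j))) * Fq a))
      = ∑ a : Fin 4,
          (Gq a * ((∑ i : Fin 4, ((-1:ℝ)^(i:ℕ)) •
              (coord (v i) a • Dq3 (fun j => v (i.succAbove j))))) * f q
            + g q * ((∑ i : Fin 4, ((-1:ℝ)^(i:ℕ)) •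
              (coord (v i) a • Dq3 (fun j => v (i.succAbove j))))) * Fq a) := by
    simp only [Finset.smul_sum, smul_add, Finset.sum_add_distrib, Finset.mul_sum,
      Finset.sum_mul, smul_mul_assoc, mul_smul_comm]
    rw [Finset.sum_comm]
    congr 1
    rw [Finset.sum_comm]
  rw [step1, step2]
  have hk : ∀ a : Fin 4, (∑ i : Fin 4, ((-1:ℝ)^(i:ℕ)) •
      (coord (v i) a • Dq3 (fun j => v (i.succAbove j))))
      = (Matrix.det (Matrix.of fun i j => coord (v i) j)) • e a := fun a => key_s7 a v
  simp only [hk]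
  rw [show (0:Hq) = (Matrix.det (Matrix.of fun i j => coord (v i) j)) •
      ((∑ a : Fin 4, Gq a * e a) * f q + g q * (∑ a : Fin 4, e a * Fq a)) from by
    rw [hGsum, hFsum]; simp]
  simp [Finset.sum_add_distrib, Finset.smul_sum, Finset.sum_mul, Finset.mul_sum,
    smul_add, smul_mul_assoc, mul_smul_comm, mul_assoc]
end
end

section
/- Let f: ℍ∖L → ℍ be left-regular and quasi-periodic with respect to a full lattice L with basis λ₁,…,λ₄ (i.e., f(q+λ_h) = f(q) + η_h for constants η_h), with poles only on L. For a ∈ ℍ^× with a^{−1}L ⊇ L, define f_a(q) = f(aq)·a. Then f_a is left-regular on ℍ∖a^{−1}L, quasi-periodic with respect to L with quasi-period vector P(df_a) = U_a · η · a (where η = ᵗ(η₁,…,η₄) and aλ = U_a λ), and res₀(f_a) = G(a)·res₀(f)·a where G(a) = a^{−1}/N(a). -/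
open Quaternion

noncomputable section

/-- The Cauchy–Fueter kernel `G(q) = q⁻¹ / N(q)`. -/
def G (q : Hq) : Hq := (Quaternion.normSq q : ℝ)⁻¹ • q⁻¹

/-! ### Auxiliary lemmas -/

def dec' (x T0 T1 T2 T3 : Hq) : Hq := x.re • T0 + x.imI • T1 + x.imJ • T2 + x.imK • T3

lemma decomp' (x : Hq) : x = x.re • (1:Hq) + x.imI • e 1 + x.imJ • e 2 + x.imK • e 3 := by
  ext <;> simp [Quaternion.re_smul] <;> simp [e]

lemma key' (a T0 T1 T2 T3 : Hq) :
    dec' (a*1) T0 T1 T2 T3 + e 1 * dec' (a * e 1) T0 T1 T2 T3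
      + e 2 * dec' (a * e 2) T0 T1 T2 T3 + e 3 * dec' (a * e 3) T0 T1 T2 T3
    = star a * (T0 + e 1 * T1 + e 2 * T2 + e 3 * T3) := by
  ext <;> simp [dec', Quaternion.re_mul, Quaternion.imI_mul, Quaternion.imJ_mul,
    Quaternion.imK_mul, Quaternion.re_smul] <;> simp [e] <;> ring

lemma Tapply' (T : Hq →L[ℝ] Hq) (x : Hq) : T x = dec' x (T 1) (T (e 1)) (T (e 2)) (T (e 3)) := by
  conv_lhs => rw [decomp' x]
  simp [dec']

lemma part1' (f : Hq → Hq) (a q : Hq) (hd : DifferentiableAt ℝ f (a*q))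
    (hr : CRl f (a*q) = 0) : CRl (fun p => f (a * p) * a) q = 0 := by
  set T := fderiv ℝ f (a*q) with hT
  have h1 : HasFDerivAt (fun p : Hq => a * p) (ContinuousLinearMap.mul ℝ Hq a) q :=
    (ContinuousLinearMap.mul ℝ Hq a).hasFDerivAt
  have h2 : HasFDerivAt f T (a*q) := hd.hasFDerivAt
  have h3 : HasFDerivAt (fun p : Hq => f (a * p))
      (T.comp (ContinuousLinearMap.mul ℝ Hq a)) q := h2.comp q h1
  have h4 : HasFDerivAt (fun p : Hq => f (a * p) * a)
      ((T.comp (ContinuousLinearMap.mul ℝ Hq a)).smulRight a) q := h3.mul_const' a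
  have hD : ∀ v, fderiv ℝ (fun p : Hq => f (a * p) * a) q v = T (a * v) * a := by
    intro v; rw [h4.fderiv]; simp [smul_eq_mul]
  have hsum : T 1 + e 1 * T (e 1) + e 2 * T (e 2) + e 3 * T (e 3) = 0 := by
    have := hr
    rw [CRl, ← hT, smul_eq_zero] at this
    rcases this with h | h
    · norm_num at h
    · exact h
  rw [CRl, hD, hD, hD, hD]
  have : T (a * 1) * a + e 1 * (T (a * e 1) * a) + e 2 * (T (a * e 2) * a)
      + e 3 * (T (a * e 3) * a)
      = (dec' (a*1) (T 1) (T (e 1)) (T (e 2)) (T (e 3))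
        + e 1 * dec' (a * e 1) (T 1) (T (e 1)) (T (e 2)) (T (e 3))
        + e 2 * dec' (a * e 2) (T 1) (T (e 1)) (T (e 2)) (T (e 3))
        + e 3 * dec' (a * e 3) (T 1) (T (e 1)) (T (e 2)) (T (e 3))) * a := by
    rw [← Tapply', ← Tapply', ← Tapply', ← Tapply']; simp [add_mul, mul_assoc]
  rw [this, key', hsum, mul_zero, zero_mul, smul_zero]

section QP
variable (lam : Fin 4 → Hq) (L : Set Hq)
  (hLdef : L = {x : Hq | ∃ c : Fin 4 → ℤ, x = ∑ h : Fin 4, ((c h : ℤ) : ℝ) • lam h})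
  (f : Hq → Hq) (η : Fin 4 → Hq)
  (hqp : ∀ q ∉ L, ∀ h : Fin 4, f (q + lam h) = f q + η h)

include hLdef in
lemma memL' (c : Fin 4 → ℤ) : (∑ h : Fin 4, ((c h : ℤ) : ℝ) • lam h) ∈ L := by
  rw [hLdef]; exact ⟨c, rfl⟩

include hLdef in
lemma not_mem_add' {p x : Hq} (hp : p ∉ L) (hx : x ∈ L) : p + x ∉ L := by
  intro hmem
  rw [hLdef] at hmem hx
  obtain ⟨c, hc⟩ := hmem
  obtain ⟨d, hd⟩ := hx
  apply hp
  rw [hLdef]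
  refine ⟨fun h => c h - d h, ?_⟩
  have hpx : p = (p + x) - x := by abel
  rw [hpx, hc, hd, ← Finset.sum_sub_distrib]
  refine Finset.sum_congr rfl fun h _ => ?_
  push_cast
  rw [sub_smul]

include hLdef hqp in
lemma single_shift' (h : Fin 4) (n : ℤ) :
    ∀ p ∉ L, f (p + (n : ℝ) • lam h) = f p + (n : ℝ) • η h := by
  induction n using Int.induction_on with
  | zero => intro p hp; simp
  | succ n ih =>
    intro p hp
    have hmem : (((n : ℤ) : ℝ) • lam h) ∈ L := by
      simpa using memL' lam L hLdef (fun k => if k = h then n else 0)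
    push_cast at hmem ih ⊢
    have hp' : p + (n : ℝ) • lam h ∉ L := not_mem_add' lam L hLdef hp hmem
    have key := hqp _ hp' h
    rw [show p + ((n:ℝ)+1) • lam h = p + (n:ℝ) • lam h + lam h by
      rw [add_smul, one_smul, add_assoc], key, ih p hp, add_smul, one_smul, add_assoc]
  | pred n ih =>
    intro p hp
    have hmem : (((-(n+1) : ℤ) : ℝ) • lam h) ∈ L := by
      simpa using memL' lam L hLdef (fun k => if k = h then -(n+1) else 0)
    push_cast at hmem ih ⊢
    have hp' : p + (-(n:ℝ)-1) • lam h ∉ L := by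
      have := not_mem_add' lam L hLdef hp hmem
      convert this using 3
      module
    have key := hqp _ hp' h
    have e1 : p + (-(n:ℝ)-1) • lam h + lam h = p + (-(n:ℝ)) • lam h := by
      rw [add_assoc]; congr 1; module
    rw [e1] at key
    rw [ih p hp] at key
    rw [eq_sub_of_add_eq key.symm]
    module
end QP

lemma multi_shift' (lam : Fin 4 → Hq) (L : Set Hq)
  (hLdef : L = {x : Hq | ∃ c : Fin 4 → ℤ, x = ∑ h : Fin 4, ((c h : ℤ) : ℝ) • lam h})
  (f : Hq → Hq) (η : Fin 4 → Hq)
  (hqp : ∀ q ∉ L, ∀ h : Fin 4, f (q + lam h) = f q + η h)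
  (c : Fin 4 → ℤ) :
    ∀ p ∉ L, f (p + ∑ h : Fin 4, ((c h : ℤ) : ℝ) • lam h)
      = f p + ∑ h : Fin 4, ((c h : ℤ) : ℝ) • η h := by
  intro p hp
  have mem : ∀ n : ℤ, ∀ h : Fin 4, (((n : ℤ) : ℝ) • lam h) ∈ L := fun n h => by
    simpa using memL' lam L hLdef (fun k => if k = h then n else 0)
  have s0 := single_shift' lam L hLdef f η hqp 0 (c 0) p hp
  have hp1 : p + ((c 0 : ℤ) : ℝ) • lam 0 ∉ L := not_mem_add' lam L hLdef hp (mem _ _)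
  have s1 := single_shift' lam L hLdef f η hqp 1 (c 1) _ hp1
  have hp2 : p + ((c 0 : ℤ) : ℝ) • lam 0 + ((c 1 : ℤ) : ℝ) • lam 1 ∉ L :=
    not_mem_add' lam L hLdef hp1 (mem _ _)
  have s2 := single_shift' lam L hLdef f η hqp 2 (c 2) _ hp2
  have hp3 : p + ((c 0 : ℤ) : ℝ) • lam 0 + ((c 1 : ℤ) : ℝ) • lam 1 + ((c 2 : ℤ) : ℝ) • lam 2 ∉ L :=
    not_mem_add' lam L hLdef hp2 (mem _ _)
  have s3 := single_shift' lam L hLdef f η hqp 3 (c 3) _ hp3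
  rw [Fin.sum_univ_four, Fin.sum_univ_four,
    show p + (((c 0 : ℤ) : ℝ) • lam 0 + ((c 1 : ℤ) : ℝ) • lam 1 + ((c 2 : ℤ) : ℝ) • lam 2
        + ((c 3 : ℤ) : ℝ) • lam 3)
      = p + ((c 0 : ℤ) : ℝ) • lam 0 + ((c 1 : ℤ) : ℝ) • lam 1 + ((c 2 : ℤ) : ℝ) • lam 2
        + ((c 3 : ℤ) : ℝ) • lam 3 by abel,
    s3, s2, s1, s0]
  abel

lemma G_mul' (a q : Hq) : G (a * q) = G q * G a := by
  simp only [G, map_mul, mul_inv_rev]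
  rw [smul_mul_assoc, mul_smul_comm, smul_smul]

/-- Let `f` be left-regular and quasi-periodic with respect to the full lattice `L`
spanned by `λ₁,…,λ₄`, with poles only on `L` and residue data `f = G·r + (regular)` at `0`.
For `a ≠ 0` with `a⁻¹L ⊇ L` (i.e. `aL ⊆ L`), the function `f_a(q) = f(aq)·a` is
left-regular on `ℍ ∖ a⁻¹L`, quasi-periodic with respect to `L` with quasi-period vector
`U_a·η·a`, and `res₀(f_a) = G(a)·res₀(f)·a`. -/

theorem f_a_properties (lam : Fin 4 → Hq) (hlam : LinearIndependent ℝ lam)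
    (L : Set Hq)
    (hLdef : L = {x : Hq | ∃ c : Fin 4 → ℤ, x = ∑ h : Fin 4, ((c h : ℤ) : ℝ) • lam h})
    (f : Hq → Hq) (η : Fin 4 → Hq)
    (hdiff : ∀ q ∉ L, DifferentiableAt ℝ f q)
    (hreg : ∀ q ∉ L, CRl f q = 0)
    (hqp : ∀ q ∉ L, ∀ h : Fin 4, f (q + lam h) = f q + η h)
    (a : Hq) (ha : a ≠ 0) (haL : ∀ x ∈ L, a * x ∈ L)
    (Ua : Matrix (Fin 4) (Fin 4) ℤ)
    (hUa : ∀ h : Fin 4, a * lam h = ∑ k : Fin 4, ((Ua h k : ℤ) : ℝ) • lam k)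
    (r : Hq)
    (hres : ∃ f₀ : Hq → Hq, DifferentiableAt ℝ f₀ 0 ∧
      ∀ᶠ q in nhdsWithin (0 : Hq) {(0 : Hq)}ᶜ, f q = G q * r + f₀ q) :
    (∀ q : Hq, a * q ∉ L → CRl (fun p => f (a * p) * a) q = 0) ∧
    (∀ q : Hq, a * q ∉ L → ∀ h : Fin 4,
      f (a * (q + lam h)) * a = f (a * q) * a + ∑ k : Fin 4, ((Ua h k : ℤ) : ℝ) • (η k * a)) ∧
    (∃ g₀ : Hq → Hq, DifferentiableAt ℝ g₀ 0 ∧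
      ∀ᶠ q in nhdsWithin (0 : Hq) {(0 : Hq)}ᶜ,
        f (a * q) * a = G q * (G a * r * a) + g₀ q) := by
  refine ⟨?_, ?_, ?_⟩
  · intro q hq
    exact part1' f a q (hdiff _ hq) (hreg _ hq)
  · intro q hq h
    have ha2 : a * (q + lam h) = a * q + ∑ k : Fin 4, ((Ua h k : ℤ) : ℝ) • lam k := by
      rw [mul_add, hUa h]
    rw [ha2, multi_shift' lam L hLdef f η hqp (Ua h) (a * q) hq, add_mul, Finset.sum_mul]
    congr 1
    exact Finset.sum_congr rfl fun k _ => smul_mul_assoc _ _ _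
  · obtain ⟨f₀, hf₀, hev⟩ := hres
    refine ⟨fun q => f₀ (a * q) * a, ?_, ?_⟩
    · have h1 : DifferentiableAt ℝ (fun q : Hq => a * q) 0 :=
        (ContinuousLinearMap.mul ℝ Hq a).differentiableAt
      have h0 : DifferentiableAt ℝ f₀ (a * 0) := by simpa using hf₀
      exact (h0.comp 0 h1).mul_const a
    · have hc : Filter.Tendsto (fun q : Hq => a * q) (nhds 0) (nhds 0) := by
        have := (continuous_const.mul continuous_id (M := Hq) (f := fun _ => a)).tendsto 0
        simpa [Pi.mul_def] using this
      have htend : Filter.Tendsto (fun q : Hq => a * q)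
          (nhdsWithin 0 {(0:Hq)}ᶜ) (nhdsWithin 0 {(0:Hq)}ᶜ) := by
        refine tendsto_nhdsWithin_of_tendsto_nhds_of_eventually_within _
          (hc.mono_left nhdsWithin_le_nhds) ?_
        filter_upwards [self_mem_nhdsWithin] with q hq
        simp only [Set.mem_compl_iff, Set.mem_singleton_iff] at hq ⊢
        exact mul_ne_zero ha hq
      filter_upwards [htend.eventually hev] with q hq
      rw [hq, add_mul, G_mul' a q]
      simp [mul_assoc]
end
end
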